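/- On M = ℝ² with the symmetries s_{(a,ℓ)}(a′,ℓ′) = (2a − a′, 2cosh(a − a′)ℓ − ℓ′), the following hold for all x, y ∈ M: (i) s_x ∘ s_x = id; (ii) s_x(x) = x; (iii) s_x ∘ s_y ∘ s_x = s_{s_x(y)}. (These are the symmetric-space axioms for the solvable symplectic symmetric surface SO(1,1) ⋉ ℝ²/ℝ in the global Darboux coordinates of Section 8.3.) -/
import Mathlib


/-- The symmetry `s_{(a,ℓ)}(a',ℓ') = (2a - a', 2cosh(a - a')ℓ - ℓ')` of the
solvable symplectic symmetric surface `SO(1,1) ⋉ ℝ² / ℝ` in global Darboux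
coordinates. -/
noncomputable def symmPoincare (x y : ℝ × ℝ) : ℝ × ℝ :=
  (2 * x.1 - y.1, 2 * Real.cosh (x.1 - y.1) * x.2 - y.2)

lemma cosh_helper (A B : ℝ) :
    Real.cosh (A + B) + Real.cosh (A - B) = 2 * Real.cosh A * Real.cosh B := by
  rw [Real.cosh_add, Real.cosh_sub]; ring

/-- the maps `s_x` satisfy the symmetric-space axioms:
`s_x ∘ s_x = id`, `s_x(x) = x`, and `s_x ∘ s_y ∘ s_x = s_{s_x(y)}`. -/
theorem symmPoincare_symmetric_space_axioms :
    (∀ x y : ℝ × ℝ, symmPoincare x (symmPoincare x y) = y) ∧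
    (∀ x : ℝ × ℝ, symmPoincare x x = x) ∧
    (∀ x y z : ℝ × ℝ,
      symmPoincare x (symmPoincare y (symmPoincare x z)) =
        symmPoincare (symmPoincare x y) z) := by
  refine ⟨?_, ?_, ?_⟩
  · intro x y
    simp only [symmPoincare, Prod.ext_iff]
    refine ⟨by ring, ?_⟩
    rw [show x.1 - (2 * x.1 - y.1) = -(x.1 - y.1) by ring, Real.cosh_neg]
    ring
  · intro x
    simp only [symmPoincare, Prod.ext_iff]
    refine ⟨by ring, ?_⟩
    simp [Real.cosh_zero]
    ring
  · intro x y z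
    simp only [symmPoincare, Prod.ext_iff]
    constructor
    · ring
    · have h1 : x.1 - (2 * y.1 - (2 * x.1 - z.1)) =
        (2 * x.1 - y.1 - z.1) + (x.1 - y.1) := by ring
      have h2 : x.1 - z.1 = (2 * x.1 - y.1 - z.1) - (x.1 - y.1) := by ring
      have h3 : y.1 - (2 * x.1 - z.1) = -(2 * x.1 - y.1 - z.1) := by ring
      have h4 : 2 * x.1 - y.1 - z.1 = (2 * x.1 - y.1 - z.1) := rfl
      have key := cosh_helper (2 * x.1 - y.1 - z.1) (x.1 - y.1)
      rw [h1, h2, h3, Real.cosh_neg]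
      linear_combination 2 * x.2 * key
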